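/- arXiv:1502.02747 — 3 statements merged into one kernel-verified Lean document; each statement's English description precedes it below -/
import Mathlib

section
/- Let γ ∈ (0,1), x_A > 0, and T = (x_T,y_T), and set d = √((x_A−x_T)²+y_T²). The positive root of the quadratic 4γ²x_A²α² + 4γx_A d α + (1−γ²)d² − 4γ²x_Ax_T = 0 is ᾱ = (γ·√((x_A+x_T)²+y_T²) − √((x_A−x_T)²+y_T²)) / (2γx_A), provided γ·√((x_A+x_T)²+y_T²) > √((x_A−x_T)²+y_T²). -/
/-- The critical speed ratio ᾱ is the positive root of the quadratic
4γ²x_A²α² + 4γx_A d α + (1-γ²)d² - 4γ²x_A x_T = 0. -/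
theorem stmt4 (γ xA xT yT : ℝ) (hγ0 : 0 < γ) (hγ1 : γ < 1) (hxA : 0 < xA)
    (d : ℝ) (hd : d = Real.sqrt ((xA - xT)^2 + yT^2))
    (hin : γ * Real.sqrt ((xA + xT)^2 + yT^2) > Real.sqrt ((xA - xT)^2 + yT^2)) :
    let αbar := (γ * Real.sqrt ((xA + xT)^2 + yT^2)
        - Real.sqrt ((xA - xT)^2 + yT^2)) / (2*γ*xA)
    4*γ^2*xA^2*αbar^2 + 4*γ*xA*d*αbar + (1 - γ^2)*d^2 - 4*γ^2*xA*xT = 0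
      ∧ 0 < αbar := by
  intro αbar
  set s := Real.sqrt ((xA + xT)^2 + yT^2) with hs
  have hs2 : s^2 = (xA + xT)^2 + yT^2 := Real.sq_sqrt (by positivity)
  have hd2 : d^2 = (xA - xT)^2 + yT^2 := by
    rw [hd]; exact Real.sq_sqrt (by positivity)
  have hdnn : 0 ≤ d := hd ▸ Real.sqrt_nonneg _
  have hne : 2*γ*xA ≠ 0 := by positivity
  have hab : αbar = (γ*s - d)/(2*γ*xA) := by simp only [αbar, hs, hd]
  have key : s^2 - d^2 - 4*xA*xT = 0 := by rw [hs2, hd2]; ring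
  constructor
  · rw [hab]
    field_simp
    linear_combination (4*γ^2) * key
  · rw [hab]
    exact div_pos (by linarith [hin]) (by positivity)
end

section
/- Let T = (x_T, y_T) lie strictly inside the DA Apollonius circle with center (a,0) and radius r_A (where a,r_A are as determined by γ and x_A with 0<γ<1, x_A>0), and let α > ᾱ where ᾱ = (γ√((x_A+x_T)²+y_T²) − √((x_A−x_T)²+y_T²))/(2γx_A) > 0. Then the AT Apollonius circle with center O = ((x_T − α²x_A)/(1−α²), y_T/(1−α²)) and radius r_O = (α/(1−α²))d, d = dist(A,T), intersects the exterior of the DA Apollonius circle, i.e., dist((a,0),O) + r_O > r_A. -/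
/-- If T is strictly inside the DA Apollonius circle and α > ᾱ, then the AT
Apollonius circle intersects the exterior of the DA circle:
dist((a,0),O) + r_O > r_A. -/
theorem stmt7 (γ xA xT yT α : ℝ) (hγ0 : 0 < γ) (hγ1 : γ < 1) (hxA : 0 < xA)
    (a rA : ℝ) (ha : a = ((1 + γ^2)/(1 - γ^2)) * xA)
    (hrA : rA = (2*γ/(1 - γ^2)) * xA)
    (hinside : Real.sqrt ((xT - a)^2 + yT^2) < rA)
    (αbar : ℝ)
    (hαbar : αbar = (γ * Real.sqrt ((xA + xT)^2 + yT^2)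
        - Real.sqrt ((xA - xT)^2 + yT^2)) / (2*γ*xA))
    (hαbar0 : 0 < αbar) (hα : αbar < α) (hα1 : α < 1)
    (d : ℝ) (hd : d = Real.sqrt ((xA - xT)^2 + yT^2))
    (xO yO rO : ℝ)
    (hxO : xO = (xT - α^2*xA)/(1 - α^2)) (hyO : yO = yT/(1 - α^2))
    (hrO : rO = (α/(1 - α^2)) * d) :
    Real.sqrt ((a - xO)^2 + yO^2) + rO > rA := by
  set TD := Real.sqrt ((xA + xT)^2 + yT^2) with hTD
  have hα0 : 0 < α := lt_trans hαbar0 hα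
  have hβ : (0:ℝ) < 1 - α^2 := by nlinarith
  have hK : (0:ℝ) < 1 - γ^2 := by nlinarith
  have hβ' : (1 - α^2) ≠ 0 := ne_of_gt hβ
  have hK' : (1 - γ^2) ≠ 0 := ne_of_gt hK
  have hd0 : 0 ≤ d := hd ▸ Real.sqrt_nonneg _
  have hTD0 : 0 ≤ TD := Real.sqrt_nonneg _
  have hd2 : d^2 = (xA - xT)^2 + yT^2 := by
    rw [hd]; exact Real.sq_sqrt (by positivity)
  have hTD2 : TD^2 = (xA + xT)^2 + yT^2 := Real.sq_sqrt (by positivity)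
  -- γ TD = 2 γ xA ᾱ + d
  have hγTD : γ * TD = 2*γ*xA*αbar + d := by
    rw [hαbar, ← hd]; field_simp; ring
  -- E := (2 γ xA α + d)^2 - γ^2 TD^2 > 0
  have hE : 0 < (2*γ*xA*α + d)^2 - γ^2 * ((xA + xT)^2 + yT^2) := by
    have h1 : γ * TD < 2*γ*xA*α + d := by
      have := mul_lt_mul_of_pos_left hα (by positivity : (0:ℝ) < 2*γ*xA)
      linarith
    have h2 : 0 ≤ γ * TD := by positivity
    nlinarith [hTD2]
  -- clear denominators
  have hN1 : (a - xO) * ((1-α^2)*(1-γ^2))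
      = (1+γ^2)*xA*(1-α^2) - (xT - α^2*xA)*(1-γ^2) := by
    rw [ha, hxO]; field_simp
  have hN2 : yO * ((1-α^2)*(1-γ^2)) = yT*(1-γ^2) := by
    rw [hyO]; field_simp
  have hN3 : (rA - rO) * ((1-α^2)*(1-γ^2)) = 2*γ*xA*(1-α^2) - α*d*(1-γ^2) := by
    rw [hrA, hrO]; field_simp
  -- key identity (multiplied out)
  have key : ((a - xO)^2 + yO^2 - (rA - rO)^2) * ((1-α^2)*(1-γ^2))^2
      = ((2*γ*xA*α + d)^2 - γ^2 * ((xA + xT)^2 + yT^2)) * ((1-α^2)*(1-γ^2)) := by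
    linear_combination
      ((a - xO) * ((1-α^2)*(1-γ^2)) + ((1+γ^2)*xA*(1-α^2) - (xT - α^2*xA)*(1-γ^2))) * hN1
      + (yO * ((1-α^2)*(1-γ^2)) + yT*(1-γ^2)) * hN2
      - ((rA - rO) * ((1-α^2)*(1-γ^2)) + (2*γ*xA*(1-α^2) - α*d*(1-γ^2))) * hN3
      + (-(1-γ^2)*(1-α^2*γ^2)) * hd2
  have hS : (rA - rO)^2 < (a - xO)^2 + yO^2 := by
    have hpos : 0 < ((a - xO)^2 + yO^2 - (rA - rO)^2) * ((1-α^2)*(1-γ^2))^2 := by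
      rw [key]; exact mul_pos hE (mul_pos hβ hK)
    have hsq : 0 < ((1-α^2)*(1-γ^2))^2 := by positivity
    have h := div_pos hpos hsq
    rw [mul_div_cancel_right₀ _ (ne_of_gt hsq)] at h
    linarith
  have habs : |rA - rO| < Real.sqrt ((a - xO)^2 + yO^2) := by
    rw [← Real.sqrt_sq_eq_abs]
    exact Real.sqrt_lt_sqrt (sq_nonneg _) hS
  have := le_abs_self (rA - rO)
  linarith
end

section
/- At α = ᾱ = (γ√((x_A+x_T)²+y_T²) − d)/(2γx_A) with d = √((x_A−x_T)²+y_T²), and assuming 0 < ᾱ < 1, the AT Apollonius circle is internally tangent to the DA Apollonius circle: dist((a,0), O) = r_A − r_O, where O = ((x_T − ᾱ²x_A)/(1−ᾱ²), y_T/(1−ᾱ²)), r_O = (ᾱ/(1−ᾱ²))d, a = ((1+γ²)/(1−γ²))x_A, r_A = (2γ/(1−γ²))x_A. -/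
set_option maxHeartbeats 2000000 in
/-- At the critical speed ratio ᾱ, the AT Apollonius circle is internally
tangent to the DA Apollonius circle: dist((a,0),O) = r_A - r_O. -/
theorem stmt8 (γ xA xT yT : ℝ) (hγ0 : 0 < γ) (hγ1 : γ < 1) (hxA : 0 < xA)
    (d : ℝ) (hd : d = Real.sqrt ((xA - xT)^2 + yT^2))
    (αbar : ℝ)
    (hαbar : αbar = (γ * Real.sqrt ((xA + xT)^2 + yT^2) - d) / (2*γ*xA))
    (hαbar0 : 0 < αbar) (hαbar1 : αbar < 1)
    (a rA xO yO rO : ℝ)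
    (ha : a = ((1 + γ^2)/(1 - γ^2)) * xA)
    (hrA : rA = (2*γ/(1 - γ^2)) * xA)
    (hxO : xO = (xT - αbar^2*xA)/(1 - αbar^2)) (hyO : yO = yT/(1 - αbar^2))
    (hrO : rO = (αbar/(1 - αbar^2)) * d) :
    Real.sqrt ((a - xO)^2 + yO^2) = rA - rO := by
  set s : ℝ := Real.sqrt ((xA + xT)^2 + yT^2) with hsdef
  have hs0 : 0 ≤ s := Real.sqrt_nonneg _
  have hs2 : s^2 = (xA + xT)^2 + yT^2 := Real.sq_sqrt (by positivity)
  have hd0 : 0 ≤ d := hd ▸ Real.sqrt_nonneg _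
  have hd2 : d^2 = (xA - xT)^2 + yT^2 := by rw [hd]; exact Real.sq_sqrt (by positivity)
  have hγ2 : (0:ℝ) < 1 - γ^2 := by nlinarith
  have hα2 : (0:ℝ) < 1 - αbar^2 := by nlinarith
  have hγne : γ ≠ 0 := ne_of_gt hγ0
  have hxAne : xA ≠ 0 := ne_of_gt hxA
  -- key relation: γ s = d + 2 γ xA αbar
  have h3 : γ * s = d + 2*γ*xA*αbar := by
    rw [hαbar]; field_simp; ring
  have h4 : s^2 = d^2 + 4*xA*xT := by linear_combination hs2 - hd2
  -- eliminate s: relation among goal variables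
  have hrel : (d + 2*γ*xA*αbar)^2 = γ^2*(d^2 + 4*xA*xT) := by
    linear_combination (-(γ*s + d + 2*γ*xA*αbar)) * h3 + γ^2 * h4
  have hxT : xT = ((d + 2*γ*xA*αbar)^2 - γ^2*d^2)/(4*γ^2*xA) := by
    rw [eq_div_iff (by positivity)]
    linear_combination -hrel
  have hyT2 : yT^2 = d^2 - (xA - xT)^2 := by linear_combination -hd2
  -- sign: rA - rO ≥ 0
  have hxTle : xT ≤ xA + d := by
    nlinarith [hd2, sq_nonneg yT, hd0, sq_nonneg (xT - xA - d)]
  have hstri : s ≤ d + 2*xA := by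
    nlinarith [h4, hxTle, hd0, hs0, hxA]
  have hsle2 : s*(1-γ) ≤ 2*xA*(1 - γ*αbar) := by nlinarith [h3, hstri]
  have hγα : γ*αbar < 1 := by nlinarith
  have e1 : αbar*(1+γ)*(s*(1-γ)) ≤ αbar*(1+γ)*(2*xA*(1 - γ*αbar)) :=
    mul_le_mul_of_nonneg_left hsle2 (by positivity)
  have e1' : γ*(αbar*(1+γ)*(s*(1-γ))) ≤ γ*(αbar*(1+γ)*(2*xA*(1 - γ*αbar))) :=
    mul_le_mul_of_nonneg_left e1 hγ0.le
  have hfac : (0:ℝ) ≤ γ*xA*((1 - γ*αbar)*(1 - αbar)) := by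
    have h1 : (0:ℝ) ≤ 1 - γ*αbar := by linarith
    have h2 : (0:ℝ) ≤ 1 - αbar := by linarith
    positivity
  have e2 : γ*αbar*(1-γ^2)*s ≤ γ*(2*xA*(1-γ^2*αbar^2)) := by
    nlinarith [e1', hfac]
  have h3c : αbar*(1-γ^2)*d = γ*αbar*(1-γ^2)*s - 2*γ*xA*αbar^2*(1-γ^2) := by
    linear_combination (-(αbar*(1-γ^2))) * h3
  have hsign : αbar * d * (1 - γ^2) ≤ 2*γ*xA*(1 - αbar^2) := by
    nlinarith [e2, h3c]
  have hY : 0 ≤ rA - rO := by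
    rw [hrA, hrO, sub_nonneg, div_mul_eq_mul_div, div_mul_eq_mul_div,
      div_le_div_iff₀ hα2 hγ2]
    nlinarith [hsign]
  have key : (a - xO)^2 + yO^2 = (rA - rO)^2 := by
    subst ha hrA hxO hyO hrO
    rw [div_pow yT, hyT2, hxT]
    field_simp
    ring
  rw [key, Real.sqrt_sq hY]
end
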